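/- Let Λ be a lattice (discrete cocompact subgroup) in a second countable locally compact abelian group G. Then there exists a relatively compact fundamental domain B for Λ in G with nonempty interior, i.e., a measurable set B such that the translates {λB : λ ∈ Λ} partition G, the closure of B is compact, and the interior of B is nonempty. -/

import Mathlib

/-- `B` is a fundamental domain for the subgroup `Λ` in `G`: every `x ∈ G` can be written
uniquely as `x = b * λ` with `b ∈ B` and `λ ∈ Λ` (equivalently, the translates `λ • B`
partition `G`). -/
def IsFundDomain {G : Type*} [Group G] (Λ : Subgroup G) (B : Set G) : Prop :=
  ∀ x : G, ∃! p : B × Λ, x = (p.1 : G) * (p.2 : G)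

open Pointwise TopologicalSpace in
/-- A lattice in a second countable locally compact abelian group admits a
relatively compact measurable fundamental domain with nonempty interior. -/
theorem exists_relatively_compact_fundamental_domain_with_nonempty_interior
    {G : Type*} [CommGroup G] [TopologicalSpace G] [IsTopologicalGroup G]
    [LocallyCompactSpace G] [T2Space G] [SecondCountableTopology G]
    [MeasurableSpace G] [BorelSpace G]
    (Λ : Subgroup G) [DiscreteTopology Λ] [CompactSpace (G ⧸ Λ)] :
    ∃ B : Set G, MeasurableSet B ∧ IsFundDomain Λ B ∧
      IsCompact (closure B) ∧ (interior B).Nonempty := by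
  classical
  have hΛct : Countable Λ := separableSpace_iff_countable.mp inferInstance
  have memsmul : ∀ (W : Set G) (a x : G), x ∈ a • W ↔ a⁻¹ * x ∈ W := by
    intro W a x; rw [Set.mem_smul_set_iff_inv_smul_mem, smul_eq_mul]
  -- an open neighborhood of 1 isolating Λ
  obtain ⟨V, hVo, hV1, hVΛ⟩ :
      ∃ V : Set G, IsOpen V ∧ (1:G) ∈ V ∧ ∀ g ∈ Λ, g ∈ V → g = 1 := by
    have h1 : IsOpen ({1} : Set Λ) := isOpen_discrete _
    rw [isOpen_induced_iff] at h1
    obtain ⟨V, hVo, hV⟩ := h1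
    refine ⟨V, hVo, ?_, ?_⟩
    · have : (⟨1, Λ.one_mem⟩ : Λ) ∈ Subtype.val ⁻¹' V := by rw [hV]; rfl
      exact this
    · intro g hg hgV
      have : (⟨g, hg⟩ : Λ) ∈ Subtype.val ⁻¹' V := hgV
      rw [hV] at this
      exact congrArg Subtype.val this
  obtain ⟨W₀, hW₀o, hW₀1, hW₀mul⟩ := exists_open_nhds_one_mul_subset (hVo.mem_nhds hV1)
  obtain ⟨K₁, hK₁c, hK₁n⟩ := exists_compact_mem_nhds (1 : G)
  set W : Set G := W₀ ∩ W₀⁻¹ ∩ interior K₁ with hWdef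
  have hWo : IsOpen W := (hW₀o.inter hW₀o.inv).inter isOpen_interior
  have hW1 : (1:G) ∈ W :=
    ⟨⟨hW₀1, by simpa using hW₀1⟩, mem_interior_iff_mem_nhds.mpr hK₁n⟩
  have hWK : W ⊆ K₁ := fun x hx => interior_subset hx.2
  have hWsep : ∀ w₁ w₂ : G, w₁ ∈ W → w₂ ∈ W → w₁⁻¹ * w₂ ∈ Λ → w₁ = w₂ := by
    intro w₁ w₂ h₁ h₂ hmem
    have hinv : w₁⁻¹ ∈ W₀ := Set.mem_inv.mp h₁.1.2
    have hVmem : w₁⁻¹ * w₂ ∈ V := hW₀mul (Set.mul_mem_mul hinv h₂.1.1)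
    have := hVΛ _ hmem hVmem
    exact inv_mul_eq_one.mp this
  have hWclc : IsCompact (closure W) :=
    hK₁c.of_isClosed_subset isClosed_closure (closure_minimal hWK hK₁c.isClosed)
  -- relatively compact open set surjecting onto the quotient
  have hKy : ∀ y : G, ∃ K : Set G, IsCompact K ∧ K ∈ nhds y := fun y => exists_compact_mem_nhds y
  choose K hKc hKn using hKy
  have hcov : (Set.univ : Set (G ⧸ Λ)) ⊆
      ⋃ y : G, (QuotientGroup.mk '' interior (K y) : Set (G ⧸ Λ)) := by
    rintro q -
    obtain ⟨y, rfl⟩ := QuotientGroup.mk_surjective q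
    exact Set.mem_iUnion.mpr ⟨y, ⟨y, mem_interior_iff_mem_nhds.mpr (hKn y), rfl⟩⟩
  obtain ⟨s, hs⟩ := isCompact_univ.elim_finite_subcover
    (fun y : G => (QuotientGroup.mk '' interior (K y) : Set (G ⧸ Λ)))
    (fun y => QuotientGroup.isOpenMap_coe _ isOpen_interior) hcov
  set U₀ : Set G := ⋃ y ∈ s, interior (K y) with hU₀def
  set C : Set G := ⋃ y ∈ s, K y with hCdef
  have hCc : IsCompact C := s.isCompact_biUnion (fun y _ => hKc y)
  have hU₀C : U₀ ⊆ C := Set.iUnion₂_mono (fun y _ => interior_subset)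
  have hU₀surj : ∀ x : G, ∃ l ∈ Λ, x * l ∈ U₀ := by
    intro x
    have hx := hs (Set.mem_univ (QuotientGroup.mk x : G ⧸ Λ))
    obtain ⟨y, hy, u, hu, hq⟩ := Set.mem_iUnion₂.mp hx
    have hux : u⁻¹ * x ∈ Λ := QuotientGroup.eq.mp hq
    refine ⟨x⁻¹ * u, ?_, ?_⟩
    · have := Λ.inv_mem hux; simpa [mul_comm] using this
    · have : x * (x⁻¹ * u) = u := by group
      rw [this]
      exact Set.mem_biUnion hy hu
  -- cover C by finitely many translates of W
  have hCcov : C ⊆ ⋃ z : G, z • W := by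
    intro x hx
    exact Set.mem_iUnion.mpr ⟨x, (memsmul W x x).mpr (by simpa using hW1)⟩
  obtain ⟨t, ht⟩ := hCc.elim_finite_subcover (fun z : G => z • W) (fun z => hWo.smul z) hCcov
  -- set up the enumeration
  set L : List G := 1 :: t.toList with hLdef
  set c : ℕ → G := fun i => L.getD i 1 with hcdef
  set O : ℕ → Set G := fun i => c i • W with hOdef
  set sat : Set G → Set G := fun S => ⋃ l : Λ, (l : G) • S with hsatdef
  set D : ℕ → Set G := fun i => O i \ sat (⋃ j, ⋃ _ : j < i, O j) with hDdef
  set B : Set G := ⋃ i, D i with hBdef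
  have hc0 : c 0 = 1 := rfl
  have hcL : ∀ i, c i ∈ L := by
    intro i
    by_cases h : i < L.length
    · rw [hcdef]; simp only []; rw [List.getD_eq_getElem L 1 h]; exact List.getElem_mem h
    · have : c i = 1 := List.getD_eq_default L 1 (le_of_not_gt h)
      rw [this]; exact List.mem_cons_self
  have hOopen : ∀ i, IsOpen (O i) := fun i => hWo.smul (c i)
  -- injectivity of each O i on cosets
  have hInj : ∀ i (a b : G), a ∈ O i → b ∈ O i → a⁻¹ * b ∈ Λ → a = b := by
    intro i a b ha hb hab
    obtain ⟨w₁, hw₁, rfl⟩ := ha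
    obtain ⟨w₂, hw₂, rfl⟩ := hb
    have key : (c i • w₁)⁻¹ * (c i • w₂) = w₁⁻¹ * w₂ := by
      simp only [smul_eq_mul]; group
    rw [key] at hab
    rw [hWsep w₁ w₂ hw₁ hw₂ hab]
  -- every coset meets some O i
  have hCovAll : ∀ x : G, ∃ i, ∃ l ∈ Λ, x * l ∈ O i := by
    intro x
    obtain ⟨l, hl, hxl⟩ := hU₀surj x
    have hmem : x * l ∈ ⋃ z ∈ t, z • W := ht (hU₀C hxl)
    obtain ⟨z, hz, hzW⟩ := Set.mem_iUnion₂.mp hmem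
    have hzL : z ∈ L := List.mem_cons_of_mem _ (Finset.mem_toList.mpr hz)
    obtain ⟨n, hn⟩ := List.mem_iff_get.mp hzL
    refine ⟨n, l, hl, ?_⟩
    have : c n = z := by rw [hcdef]; simp only []; rw [List.getD_eq_getElem L 1 n.isLt]; exact hn
    rw [hOdef]; simp only []; rw [this]; exact hzW
  -- measurability
  have hBm : MeasurableSet B := by
    have hOm : ∀ i, MeasurableSet (O i) := fun i => (hOopen i).measurableSet
    have hsatm : ∀ S : Set G, MeasurableSet S → MeasurableSet (sat S) := by
      intro S hS
      refine MeasurableSet.iUnion fun l => ?_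
      have : (l : G) • S = (fun x => (l : G)⁻¹ * x) ⁻¹' S := by
        ext x; rw [memsmul]; rfl
      rw [this]
      exact hS.preimage (measurable_const_mul _)
    exact MeasurableSet.iUnion fun i =>
      (hOm i).diff (hsatm _ (MeasurableSet.iUnion fun j => MeasurableSet.iUnion fun _ => hOm j))
  -- fundamental domain property
  have hFD : IsFundDomain Λ B := by
    intro x
    have hex : ∃ i, ∃ l ∈ Λ, x * l ∈ O i := hCovAll x
    set k : ℕ := Nat.find hex with hkdef
    obtain ⟨l, hlΛ, hxl⟩ := Nat.find_spec hex
    have hbB : x * l ∈ B := by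
      refine Set.mem_iUnion.mpr ⟨k, hxl, ?_⟩
      intro hmem
      obtain ⟨m, hm⟩ := Set.mem_iUnion.mp hmem
      rw [memsmul] at hm
      obtain ⟨j, hj⟩ := Set.mem_iUnion.mp hm
      obtain ⟨hjk, hjmem⟩ := Set.mem_iUnion.mp hj
      have : ∃ l' ∈ Λ, x * l' ∈ O j := by
        refine ⟨l * (m : G)⁻¹, Λ.mul_mem hlΛ (Λ.inv_mem m.2), ?_⟩
        have heq : x * (l * (m : G)⁻¹) = (m : G)⁻¹ * (x * l) := by
          simp [mul_comm, mul_left_comm, mul_assoc]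
        rw [heq]; exact hjmem
      exact Nat.find_min hex hjk this
    refine ⟨⟨⟨x * l, hbB⟩, (⟨l, hlΛ⟩ : Λ)⁻¹⟩, ?_, ?_⟩
    · show x = (x * l) * ((⟨l, hlΛ⟩ : Λ)⁻¹ : Λ).val
      push_cast
      group
    · rintro ⟨⟨b', hb'⟩, m⟩ hx'
      simp only at hx'
      obtain ⟨j, hj⟩ := Set.mem_iUnion.mp hb'
      have hb'x : b' = x * (m : G)⁻¹ := by rw [hx']; group
      have hPj : ∃ l' ∈ Λ, x * l' ∈ O j := ⟨(m : G)⁻¹, Λ.inv_mem m.2, by rw [← hb'x]; exact hj.1⟩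
      have hkj : k ≤ j := Nat.find_min' hex hPj
      have hjk : j = k := by
        by_contra hne
        have hlt : k < j := lt_of_le_of_ne hkj (Ne.symm hne)
        apply hj.2
        refine Set.mem_iUnion.mpr ⟨(⟨l, hlΛ⟩ : Λ)⁻¹ * m⁻¹, ?_⟩
        rw [memsmul]
        refine Set.mem_iUnion.mpr ⟨k, Set.mem_iUnion.mpr ⟨hlt, ?_⟩⟩
        have hcalc : ((((⟨l, hlΛ⟩ : Λ)⁻¹ * m⁻¹ : Λ) : G))⁻¹ * b' = x * l := by
          push_cast
          rw [hb'x]; simp [mul_comm, mul_left_comm, mul_assoc]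
        rw [hcalc]; exact hxl
      rw [hjk] at hj
      have hmemΛ : b'⁻¹ * (x * l) ∈ Λ := by
        have : b'⁻¹ * (x * l) = (m : G) * l := by
          rw [hb'x]; simp [mul_comm, mul_left_comm, mul_assoc]
        rw [this]; exact Λ.mul_mem m.2 hlΛ
      have hbb : b' = x * l := hInj k b' (x * l) hj.1 hxl hmemΛ
      have hml : (m : G) = l⁻¹ := by
        have h1 : x = (x * l) * (m : G) := by rw [← hbb]; exact hx'
        have : l * (m : G) = 1 := by
          have := h1.symm
          calc l * (m : G) = x⁻¹ * ((x * l) * (m : G)) := by group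
            _ = 1 := by rw [← h1]; group
        calc (m : G) = l⁻¹ * (l * (m : G)) := by group
          _ = l⁻¹ := by rw [this]; group
      refine Prod.ext ?_ ?_
      · exact Subtype.ext hbb
      · exact Subtype.ext (by simpa using hml)
  -- relative compactness
  have hcc : IsCompact (closure B) := by
    have hsub : B ⊆ ⋃ z ∈ L.toFinset, z • closure W := by
      intro x hx
      obtain ⟨i, hi⟩ := Set.mem_iUnion.mp hx
      obtain ⟨w, hw, rfl⟩ := hi.1
      exact Set.mem_biUnion (List.mem_toFinset.mpr (hcL i)) ⟨w, subset_closure hw, rfl⟩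
    have hRc : IsCompact (⋃ z ∈ L.toFinset, z • closure W) :=
      L.toFinset.isCompact_biUnion (fun z _ => hWclc.smul z)
    exact hRc.of_isClosed_subset isClosed_closure
      (closure_minimal hsub hRc.isClosed)
  -- nonempty interior
  have hint : (interior B).Nonempty := by
    have hWB : W ⊆ B := by
      intro x hx
      refine Set.mem_iUnion.mpr ⟨0, ?_, ?_⟩
      · rw [hOdef]; simp only []; rw [hc0, one_smul]; exact hx
      · intro hmem
        obtain ⟨m, hm⟩ := Set.mem_iUnion.mp hmem
        rw [memsmul] at hm
        obtain ⟨j, hj⟩ := Set.mem_iUnion.mp hm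
        obtain ⟨hjk, _⟩ := Set.mem_iUnion.mp hj
        exact absurd hjk (Nat.not_lt_zero j)
    exact ⟨1, interior_maximal hWB hWo hW1⟩
  exact ⟨B, hBm, hFD, hcc, hint⟩
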